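/- Let B be a discrete valuation ring containing 1/2, with fraction field F. If an element b ∈ B is a sum of squares of elements of F, then b is a sum of squares of elements of B. -/

import Mathlib

set_option linter.unusedSectionVars false

section SOS_Aux

variable {B : Type*} [CommRing B]

private lemma isSumSq_listSum (l : List B) : IsSumSq ((l.map fun z => z * z).sum) := by
  induction l with
  | nil => simpa using IsSumSq.zero
  | cons a t ih => simpa using IsSumSq.sq_add a ih

private lemma exists_list_of_isSumSq {c : B} (h : IsSumSq c) :
    ∃ l : List B, c = (l.map fun z => z * z).sum := by
  induction h with
  | zero => exact ⟨[], rfl⟩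
  | sq_add a pS ih =>
    obtain ⟨l, rfl⟩ := ih
    exact ⟨a :: l, by simp⟩

private lemma IsSumSq.mul_sq' {s : B} (h : IsSumSq s) (x : B) : IsSumSq (s * (x * x)) := by
  induction h with
  | zero => simpa using IsSumSq.zero
  | @sq_add a S pS ih =>
    have e : (a * a + S) * (x * x) = (a * x) * (a * x) + S * (x * x) := by ring
    rw [e]
    exact IsSumSq.sq_add _ ih

private lemma listsq_scale (g : B) (l : List B) :
    ((l.map fun y => g * y).map fun z => z * z).sum
      = (g * g) * (l.map fun z => z * z).sum := by
  induction l with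
  | nil => simp
  | cons a t ih => simp only [List.map_cons, List.sum_cons, ih]; ring

end SOS_Aux

section Descent

variable {B : Type*} [CommRing B] [IsDomain B]

private lemma key_descent {π σ w ε : B} (hπ : Prime π)
    (hσ : 1 + σ = π ^ 2 * w) (hπε : π * ε = (1 + π) ^ 2 + σ) :
    ∀ d : ℕ, ∀ a b : B, π ^ d ∣ a ^ 2 + σ * b ^ 2 →
      ∃ (m : ℕ) (p q : B),
        ε ^ (2 * m) * (a ^ 2 + σ * b ^ 2) = (π * ε) ^ d * (p ^ 2 + σ * q ^ 2) := by
  intro d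
  induction d using Nat.strong_induction_on with
  | _ d IH =>
    match d with
    | 0 => exact fun a b _ => ⟨0, a, b, by ring⟩
    | (d' + 1) =>
      intro a b hdvd
      have hπ1 : π ∣ a ^ 2 + σ * b ^ 2 :=
        dvd_trans (dvd_pow_self π (Nat.succ_ne_zero d')) hdvd
      by_cases ha : π ∣ a
      · have hπσ : ¬ π ∣ σ := by
          intro hc
          have h1 : π ∣ (1 : B) := by
            have e : (1 : B) = π ^ 2 * w - σ := by linear_combination hσ
            rw [e]
            exact dvd_sub (Dvd.dvd.mul_right (dvd_pow_self π two_ne_zero) w) hc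
          exact hπ.not_unit (isUnit_of_dvd_one h1)
        have hb : π ∣ b := by
          have h1 : π ∣ σ * (b * b) := by
            have e : σ * (b * b) = (a ^ 2 + σ * b ^ 2) - a * a := by ring
            rw [e]
            exact dvd_sub hπ1 (Dvd.dvd.mul_right ha a)
          rcases hπ.dvd_mul.mp h1 with h | h
          · exact absurd h hπσ
          · rcases hπ.dvd_mul.mp h with h' | h' <;> exact h'
        obtain ⟨a', rfl⟩ := ha
        obtain ⟨b', rfl⟩ := hb
        match d' with
        | 0 =>
          refine ⟨1, (1 + π) * a' - σ * b', a' + (1 + π) * b', ?_⟩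
          have brah : ((1 + π) * a' - σ * b') ^ 2 + σ * (a' + (1 + π) * b') ^ 2
              = ((1 + π) ^ 2 + σ) * (a' ^ 2 + σ * b' ^ 2) := by ring
          rw [brah, ← hπε]
          ring
        | (d'' + 1) =>
          have e : (π * a') ^ 2 + σ * (π * b') ^ 2 = π ^ 2 * (a' ^ 2 + σ * b' ^ 2) := by
            ring
          have hdvd2 : π ^ 2 * π ^ d'' ∣ π ^ 2 * (a' ^ 2 + σ * b' ^ 2) := by
            rw [← pow_add, ← e]
            convert hdvd using 2
            omega
          have hd2 : π ^ d'' ∣ a' ^ 2 + σ * b' ^ 2 :=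
            (mul_dvd_mul_iff_left (pow_ne_zero 2 hπ.ne_zero)).mp hdvd2
          obtain ⟨m, p, q, heq⟩ := IH d'' (by omega) a' b' hd2
          refine ⟨m + 1, p, q, ?_⟩
          linear_combination (π ^ 2 * ε ^ 2) * heq
      · have hab : π ∣ (a - b) * (a + b) := by
          have e : (a - b) * (a + b) = (a ^ 2 + σ * b ^ 2) - (1 + σ) * b ^ 2 := by ring
          rw [e, hσ]
          exact dvd_sub hπ1
            (Dvd.dvd.mul_right (Dvd.dvd.mul_right (dvd_pow_self π two_ne_zero) w) _)
        have hππw : π ∣ π ^ 2 * w := Dvd.dvd.mul_right (dvd_pow_self π two_ne_zero) w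
        have main : ∀ A Bc : B, ((1 + π) ^ 2 + σ) * (a ^ 2 + σ * b ^ 2)
              = A ^ 2 + σ * Bc ^ 2 → π ∣ A → π ∣ Bc →
            ∃ (m : ℕ) (p q : B), ε ^ (2 * m) * (a ^ 2 + σ * b ^ 2)
              = (π * ε) ^ (d' + 1) * (p ^ 2 + σ * q ^ 2) := by
          intro A Bc hbrah hdA hdB
          obtain ⟨A', hA'⟩ := hdA
          obtain ⟨B', hB'⟩ := hdB
          have hb2 : π ^ 2 * (A' ^ 2 + σ * B' ^ 2) = (π * ε) * (a ^ 2 + σ * b ^ 2) := by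
            calc π ^ 2 * (A' ^ 2 + σ * B' ^ 2) = (π * A') ^ 2 + σ * (π * B') ^ 2 := by ring
              _ = A ^ 2 + σ * Bc ^ 2 := by rw [← hA', ← hB']
              _ = ((1 + π) ^ 2 + σ) * (a ^ 2 + σ * b ^ 2) := hbrah.symm
              _ = (π * ε) * (a ^ 2 + σ * b ^ 2) := by rw [← hπε]
          have hdvd2 : π ^ 2 * π ^ d' ∣ π ^ 2 * (A' ^ 2 + σ * B' ^ 2) := by
            rw [hb2]
            obtain ⟨t, ht⟩ := hdvd
            exact ⟨ε * t, by rw [ht]; ring⟩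
          have hd2 : π ^ d' ∣ A' ^ 2 + σ * B' ^ 2 :=
            (mul_dvd_mul_iff_left (pow_ne_zero 2 hπ.ne_zero)).mp hdvd2
          obtain ⟨m, p, q, heq⟩ := IH d' (by omega) A' B' hd2
          refine ⟨m + 1, p, q, ?_⟩
          apply mul_left_cancel₀ hπ.ne_zero
          linear_combination (ε ^ (2 * m + 1)) * hb2.symm + (π ^ 2 * ε) * heq
        rcases hπ.dvd_mul.mp hab with hc | hc
        · refine main ((1 + π) * a + σ * b) ((1 + π) * b - a) (by ring) ?_ ?_
          · have e : (1 + π) * a + σ * b = (a - b) + π * a + π ^ 2 * w * b := by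
              linear_combination b * hσ
            rw [e]
            exact dvd_add (dvd_add hc (dvd_mul_right π a)) (hππw.mul_right b)
          · have e : (1 + π) * b - a = (b - a) + π * b := by ring
            have hc' : π ∣ b - a := by
              have := (dvd_neg (α := B)).mpr hc
              rwa [neg_sub] at this
            rw [e]
            exact dvd_add hc' (dvd_mul_right π b)
        · refine main ((1 + π) * a - σ * b) (a + (1 + π) * b) (by ring) ?_ ?_
          · have e : (1 + π) * a - σ * b = (a + b) + π * a - π ^ 2 * w * b := by
              linear_combination (-b) * hσ
            rw [e]
            exact dvd_sub (dvd_add hc (dvd_mul_right π a)) (hππw.mul_right b)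
          · have e : a + (1 + π) * b = (a + b) + π * b := by ring
            rw [e]
            exact dvd_add hc (dvd_mul_right π b)

variable [IsDiscreteValuationRing B]

private lemma core {π : B} (hπ : Irreducible π)
    (h2 : IsUnit (2 : B)) {σ w : B}
    (hσs : IsSumSq σ) (h : 1 + σ = π ^ 2 * w) : IsSumSq w := by
  by_cases hw : w = 0
  · simpa [hw] using IsSumSq.zero
  have hπp : Prime π := (UniqueFactorizationMonoid.irreducible_iff_prime).mp hπ
  obtain ⟨ε, hε_def⟩ : ∃ ε : B, ε = 2 + π + π * w := ⟨_, rfl⟩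
  have hπε : π * ε = (1 + π) ^ 2 + σ := by rw [hε_def]; linear_combination (-1 : B) * h
  have hεu : IsUnit ε := by
    by_contra hcon
    have hmem : ε ∈ IsLocalRing.maximalIdeal B :=
      (IsLocalRing.mem_maximalIdeal ε).mpr (mem_nonunits_iff.mpr hcon)
    have hπm : π ∈ IsLocalRing.maximalIdeal B :=
      (IsLocalRing.mem_maximalIdeal π).mpr (mem_nonunits_iff.mpr hπ.not_isUnit)
    have h2m : (2 : B) ∈ IsLocalRing.maximalIdeal B := by
      have e : (2 : B) = ε - π * (1 + w) := by rw [hε_def]; ring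
      rw [e]
      exact Ideal.sub_mem _ hmem (Ideal.mul_mem_right _ _ hπm)
    exact (mem_nonunits_iff.mp ((IsLocalRing.mem_maximalIdeal _).mp h2m)) h2
  obtain ⟨ιε, hιε⟩ := hεu.exists_right_inv
  obtain ⟨e₀, u, hu⟩ := IsDiscreteValuationRing.eq_unit_mul_pow_irreducible hw hπ
  have hdvd : π ^ (e₀ + 2) ∣ (1 : B) ^ 2 + σ * 1 ^ 2 := by
    refine ⟨(u : B), ?_⟩
    linear_combination h + π ^ 2 * hu
  obtain ⟨m, p, q, heq⟩ := key_descent hπp h hπε (e₀ + 2) 1 1 hdvd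
  have hcanc : π ^ (e₀ + 2) * (ε ^ (2 * m) * (u : B))
      = π ^ (e₀ + 2) * (ε ^ (e₀ + 2) * (p ^ 2 + σ * q ^ 2)) := by
    linear_combination heq - (ε ^ (2 * m) * π ^ 2) * hu - ε ^ (2 * m) * h
  have hcanc2 : ε ^ (2 * m) * (u : B) = ε ^ (e₀ + 2) * (p ^ 2 + σ * q ^ 2) :=
    mul_left_cancel₀ (pow_ne_zero (e₀ + 2) hπp.ne_zero) hcanc
  have hpow : ε ^ (2 * m) * ιε ^ (2 * m) = 1 := by rw [← mul_pow, hιε, one_pow]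
  have hw2 : w = ιε ^ (2 * m) * ε ^ (e₀ + 2) * π ^ e₀ * (p ^ 2 + σ * q ^ 2) := by
    linear_combination hu + (π ^ e₀ * ιε ^ (2 * m)) * hcanc2 - (π ^ e₀ * (u : B)) * hpow
  rcases Nat.even_or_odd e₀ with ⟨t, ht⟩ | ⟨t, ht⟩
  · subst ht
    have hfin : w = ((ιε ^ m * ε ^ (t + 1) * π ^ t) * p) * ((ιε ^ m * ε ^ (t + 1) * π ^ t) * p)
        + σ * (((ιε ^ m * ε ^ (t + 1) * π ^ t) * q) * ((ιε ^ m * ε ^ (t + 1) * π ^ t) * q)) := by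
      linear_combination hw2
    rw [hfin]
    exact IsSumSq.sq_add _ (hσs.mul_sq' _)
  · subst ht
    have hfin : w =
        ((ιε ^ m * ε ^ (t + 1) * π ^ t) * ((1 + π) * p - σ * q))
          * ((ιε ^ m * ε ^ (t + 1) * π ^ t) * ((1 + π) * p - σ * q))
        + σ * (((ιε ^ m * ε ^ (t + 1) * π ^ t) * (p + (1 + π) * q))
          * ((ιε ^ m * ε ^ (t + 1) * π ^ t) * (p + (1 + π) * q))) := by
      linear_combination hw2 + (ιε ^ (2 * m) * ε ^ (2 * t + 2) * π ^ (2 * t)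
        * (p ^ 2 + σ * q ^ 2)) * hπε
    rw [hfin]
    exact IsSumSq.sq_add _ (hσs.mul_sq' _)

private lemma isUnit_of_not_dvd {π y : B} (hπ : Irreducible π)
    (h : ¬ π ∣ y) : IsUnit y := by
  by_contra hc
  apply h
  have hmem : y ∈ IsLocalRing.maximalIdeal B :=
    (IsLocalRing.mem_maximalIdeal y).mpr (mem_nonunits_iff.mpr hc)
  rw [hπ.maximalIdeal_eq] at hmem
  exact Ideal.mem_span_singleton.mp hmem

private lemma main_step {π : B} (hπ : Irreducible π) (h2 : IsUnit (2 : B))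
    (c : B) (l : List B) (hc : π ^ 2 * c = (l.map fun z => z * z).sum) : IsSumSq c := by
  classical
  by_cases hall : ∀ y ∈ l, π ∣ y
  · have hex : ∃ c', (l.map fun z => z * z).sum = π ^ 2 * c' ∧ IsSumSq c' := by
      clear hc
      induction l with
      | nil => exact ⟨0, by simp, IsSumSq.zero⟩
      | cons a t ih =>
        obtain ⟨c', h1, h2'⟩ := ih (fun y hy => hall y (List.mem_cons_of_mem a hy))
        obtain ⟨a', rfl⟩ := hall a List.mem_cons_self
        refine ⟨a' * a' + c', ?_, IsSumSq.sq_add a' h2'⟩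
        simp only [List.map_cons, List.sum_cons, h1]
        ring
    obtain ⟨c', h1, h2'⟩ := hex
    have hcc : c = c' := by
      apply mul_left_cancel₀ (pow_ne_zero 2 hπ.ne_zero)
      rw [hc, h1]
    rwa [hcc]
  · push_neg at hall
    obtain ⟨y, hyl, hyd⟩ := hall
    obtain ⟨u, hu⟩ := (isUnit_of_not_dvd hπ hyd).exists_right_inv
    have hperm : (l.map fun z => z * z).sum
        = y * y + ((l.erase y).map fun z => z * z).sum := by
      have hp : List.Perm l (y :: l.erase y) := List.perm_cons_erase hyl
      rw [(hp.map (fun z => z * z)).sum_eq]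
      simp
    have hsum : π ^ 2 * c = y * y + ((l.erase y).map fun z => z * z).sum :=
      hc.trans hperm
    have hσs : IsSumSq (u * u * ((l.erase y).map fun z => z * z).sum) := by
      rw [mul_comm]
      exact (isSumSq_listSum _).mul_sq' u
    have hσw : 1 + u * u * ((l.erase y).map fun z => z * z).sum
        = π ^ 2 * (u * u * c) := by
      linear_combination (-(u * u)) * hsum - (1 + y * u) * hu
    have hwS : IsSumSq (u * u * c) := core hπ h2 hσs hσw
    have hcy : c = (u * u * c) * (y * y) := by
      linear_combination (-(c) * (y * u + 1)) * hu
    rw [hcy]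
    exact hwS.mul_sq' y

end Descent

section Frac

variable {B : Type*} [CommRing B] [IsDomain B] [IsDiscreteValuationRing B]
variable {F : Type*} [Field F] [Algebra B F] [IsFractionRing B F]

private lemma elem_denom {π : B} (hπ : Irreducible π) (x : F) :
    ∃ (k : ℕ) (y : B), (algebraMap B F π) ^ k * x = algebraMap B F y := by
  obtain ⟨a, yd, hyd, hx⟩ := IsFractionRing.div_surjective (A := B) x
  have hyd0 : yd ≠ 0 := nonZeroDivisors.ne_zero hyd
  obtain ⟨k, u, hu⟩ := IsDiscreteValuationRing.eq_unit_mul_pow_irreducible hyd0 hπ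
  refine ⟨k, a * ↑u⁻¹, ?_⟩
  have hinj : Function.Injective (algebraMap B F) := IsFractionRing.injective B F
  have hydF : algebraMap B F yd ≠ 0 := fun hcon => hyd0 (hinj (by rw [hcon, map_zero]))
  have key : (a * ↑u⁻¹) * yd = a * π ^ k := by
    rw [hu]
    have huu : (↑u⁻¹ * ↑u : B) = 1 := Units.inv_mul u
    calc a * ↑u⁻¹ * (↑u * π ^ k) = a * (↑u⁻¹ * ↑u) * π ^ k := by ring
      _ = a * π ^ k := by rw [huu]; ring
  have keyF : algebraMap B F (a * ↑u⁻¹) * algebraMap B F yd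
      = algebraMap B F a * (algebraMap B F π) ^ k := by
    rw [← map_mul, key, map_mul, map_pow]
  rw [← hx, mul_div_assoc', div_eq_iff hydF]
  linear_combination -keyF

private lemma frac_decomp {π : B} (hπ : Irreducible π) (s : F) (hs : IsSumSq s) :
    ∃ (k : ℕ) (ys : List B),
      (algebraMap B F π) ^ (2 * k) * s
        = algebraMap B F ((ys.map fun z => z * z).sum) := by
  induction hs with
  | zero => exact ⟨0, [], by simp⟩
  | @sq_add x S pS ih =>
    obtain ⟨k₁, ys₁, h₁⟩ := ih
    obtain ⟨k₂, y₂, h₂⟩ := elem_denom hπ x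
    refine ⟨k₁ + k₂, (π ^ k₁ * y₂) :: ys₁.map (fun y => π ^ k₂ * y), ?_⟩
    have e1 : algebraMap B F (π ^ k₁ * y₂)
        = (algebraMap B F π) ^ k₁ * ((algebraMap B F π) ^ k₂ * x) := by
      rw [map_mul, map_pow, h₂]
    have hBside : (((ys₁.map fun y => π ^ k₂ * y).map fun z => z * z).sum : B)
        = (π ^ k₂ * π ^ k₂) * (ys₁.map fun z => z * z).sum := listsq_scale _ _
    calc (algebraMap B F π) ^ (2 * (k₁ + k₂)) * (x * x + S)
        = ((algebraMap B F π) ^ k₁ * ((algebraMap B F π) ^ k₂ * x))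
            * ((algebraMap B F π) ^ k₁ * ((algebraMap B F π) ^ k₂ * x))
          + ((algebraMap B F π) ^ k₂ * (algebraMap B F π) ^ k₂)
            * ((algebraMap B F π) ^ (2 * k₁) * S) := by ring
      _ = algebraMap B F (π ^ k₁ * y₂) * algebraMap B F (π ^ k₁ * y₂)
          + ((algebraMap B F π) ^ k₂ * (algebraMap B F π) ^ k₂)
            * algebraMap B F ((ys₁.map fun z => z * z).sum) := by rw [e1, h₁]
      _ = algebraMap B F ((π ^ k₁ * y₂) * (π ^ k₁ * y₂)
          + (π ^ k₂ * π ^ k₂) * (ys₁.map fun z => z * z).sum) := by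
            simp only [map_add, map_mul, map_pow]
      _ = algebraMap B F ((((π ^ k₁ * y₂) :: ys₁.map (fun y => π ^ k₂ * y)).map
            fun z => z * z).sum) := by
            rw [List.map_cons, List.sum_cons, hBside]

end Frac

/-- Let `B` be a discrete valuation ring in which `2` is a unit, with fraction
field `F`. If `b ∈ B` is a sum of squares in `F`, then `b` is a sum of squares in `B`. -/
theorem dvr_sum_of_squares_descends
    (B : Type*) [CommRing B] [IsDomain B] [IsDiscreteValuationRing B]
    (h2 : IsUnit (2 : B)) (b : B)
    (hb : IsSumSq (algebraMap B (FractionRing B) b)) : IsSumSq b := by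
  obtain ⟨π, hπ⟩ := IsDiscreteValuationRing.exists_irreducible B
  obtain ⟨k, ys, h⟩ := frac_decomp hπ (algebraMap B (FractionRing B) b) hb
  have hB : π ^ (2 * k) * b = (ys.map fun z => z * z).sum := by
    apply IsFractionRing.injective B (FractionRing B)
    rw [map_mul, map_pow]
    exact h
  clear h hb
  suffices H : ∀ (k : ℕ) (b : B),
      (∃ ys : List B, π ^ (2 * k) * b = (ys.map fun z => z * z).sum) → IsSumSq b by
    exact H k b ⟨ys, hB⟩
  intro k
  induction k with
  | zero =>
    rintro b ⟨ys, h⟩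
    rw [Nat.mul_zero, pow_zero, one_mul] at h
    rw [h]
    exact isSumSq_listSum ys
  | succ k ih =>
    rintro b ⟨ys, h⟩
    have hc : π ^ 2 * (π ^ (2 * k) * b) = (ys.map fun z => z * z).sum := by
      rw [← h]
      ring
    obtain ⟨l', hl'⟩ := exists_list_of_isSumSq (main_step hπ h2 _ ys hc)
    exact ih b ⟨l', hl'⟩
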